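/- The function φ : ℝ → ℝ defined by φ(x) = x − (1/2)·tanh x is a bijection of ℝ onto ℝ, and the transformed function Δ̃ := ψ ∘ φ⁻¹, where ψ(x) = x − (3/2)·tanh x, satisfies the sector bound [−1,1]: |Δ̃(u)| ≤ |u| for every real u. -/

import Mathlib

open Real Filter

private lemma tanh_hasDerivAt (x : ℝ) :
    HasDerivAt Real.tanh (1 / Real.cosh x ^ 2) x := by
  have h := (Real.hasDerivAt_sinh x).div (Real.hasDerivAt_cosh x) (Real.cosh_pos x).ne'
  have heq : (fun y => Real.sinh y / Real.cosh y) = Real.tanh := by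
    funext y; rw [Real.tanh_eq_sinh_div_cosh]
  rw [show (Real.sinh / Real.cosh) = fun y => Real.sinh y / Real.cosh y from rfl, heq] at h
  refine h.congr_deriv ?_
  have h1 : Real.cosh x ^ 2 - Real.sinh x ^ 2 = 1 := Real.cosh_sq_sub_sinh_sq x
  rw [div_left_inj' (by positivity)]
  nlinarith [Real.cosh_pos x]

private lemma abs_tanh_lt_one (x : ℝ) : |Real.tanh x| < 1 := by
  rw [Real.tanh_eq_sinh_div_cosh, abs_div, abs_of_pos (Real.cosh_pos x),
    div_lt_one (Real.cosh_pos x)]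
  nlinarith [Real.cosh_sq_sub_sinh_sq x, Real.cosh_pos x, abs_nonneg (Real.sinh x),
    sq_abs (Real.sinh x)]

private lemma continuous_tanh : Continuous Real.tanh := by
  have : Real.tanh = fun y => Real.sinh y / Real.cosh y := by
    funext y; rw [Real.tanh_eq_sinh_div_cosh]
  rw [this]
  exact Real.continuous_sinh.div Real.continuous_cosh fun y => (Real.cosh_pos y).ne'

private lemma tanh_le_self {x : ℝ} (hx : 0 ≤ x) : Real.tanh x ≤ x := by
  -- equivalent to sinh x ≤ x * cosh x
  rw [Real.tanh_eq_sinh_div_cosh, div_le_iff₀ (Real.cosh_pos x)]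
  have key : ∀ y ∈ Set.Ici (0:ℝ), Real.sinh y ≤ y * Real.cosh y := by
    have hmono : MonotoneOn (fun y : ℝ => y * Real.cosh y - Real.sinh y) (Set.Ici 0) := by
      apply monotoneOn_of_deriv_nonneg (convex_Ici 0)
      · exact ((continuous_id.mul Real.continuous_cosh).sub Real.continuous_sinh).continuousOn
      · intro y _
        exact (((hasDerivAt_id y).mul (Real.hasDerivAt_cosh y)).sub
          (Real.hasDerivAt_sinh y)).differentiableAt.differentiableWithinAt
      · intro y hy
        rw [interior_Ici] at hy
        have hd : HasDerivAt (fun y : ℝ => y * Real.cosh y - Real.sinh y)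
            (1 * Real.cosh y + y * Real.sinh y - Real.cosh y) y :=
          ((hasDerivAt_id y).mul (Real.hasDerivAt_cosh y)).sub (Real.hasDerivAt_sinh y)
        rw [hd.deriv]
        have : 0 ≤ Real.sinh y := Real.sinh_nonneg_iff.mpr (le_of_lt hy)
        nlinarith [le_of_lt (Set.mem_Ioi.mp hy)]
    intro y hy
    have := hmono (Set.self_mem_Ici) hy hy
    simp only [Real.cosh_zero, Real.sinh_zero, mul_one, zero_mul, sub_zero] at this
    linarith
  linarith [key x hx]

private lemma tanh_key (x : ℝ) : 0 ≤ Real.tanh x * (x - Real.tanh x) := by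
  rcases le_or_gt 0 x with hx | hx
  · have h1 : Real.tanh x ≤ x := tanh_le_self hx
    have h2 : 0 ≤ Real.tanh x := by
      rw [Real.tanh_eq_sinh_div_cosh]
      exact div_nonneg (Real.sinh_nonneg_iff.mpr hx) (Real.cosh_pos x).le
    nlinarith
  · have h1 : Real.tanh (-x) ≤ -x := tanh_le_self (by linarith)
    rw [Real.tanh_neg] at h1
    have h2 : 0 ≤ Real.tanh (-x) := by
      rw [Real.tanh_eq_sinh_div_cosh]
      exact div_nonneg (Real.sinh_nonneg_iff.mpr (by linarith)) (Real.cosh_pos _).le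
    rw [Real.tanh_neg] at h2
    nlinarith

private lemma phi_strictMono : StrictMono (fun x : ℝ => x - (1 / 2) * Real.tanh x) := by
  apply strictMono_of_deriv_pos
  intro x
  have hd : HasDerivAt (fun x : ℝ => x - (1 / 2) * Real.tanh x)
      (1 - (1 / 2) * (1 / Real.cosh x ^ 2)) x :=
    (hasDerivAt_id x).sub ((tanh_hasDerivAt x).const_mul (1 / 2))
  rw [hd.deriv]
  have h1 : 1 ≤ Real.cosh x := Real.one_le_cosh x
  have h2 : 1 / Real.cosh x ^ 2 ≤ 1 := by
    rw [div_le_one (by positivity)]; nlinarith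
  linarith

private lemma phi_surjective : Function.Surjective (fun x : ℝ => x - (1 / 2) * Real.tanh x) := by
  have hc : Continuous (fun x : ℝ => x - (1 / 2) * Real.tanh x) :=
    continuous_id.sub (continuous_const.mul continuous_tanh)
  apply hc.surjective
  · apply tendsto_atTop_mono (f := fun x : ℝ => x - 1 / 2)
    · intro x
      have := (_root_.abs_tanh_lt_one x)
      have := abs_lt.mp this
      linarith [this.2]
    · exact tendsto_atTop_add_const_right _ _ tendsto_id
  · apply tendsto_atBot_mono (f := fun x : ℝ => x + 1 / 2)
    · intro x
      have := abs_lt.mp (_root_.abs_tanh_lt_one x)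
      linarith [this.1]
    · exact tendsto_atBot_add_const_right _ _ tendsto_id

/-- Paper's Example 1: `φ(x) = x - (1/2) tanh x` is a bijection of `ℝ`, and the
transformed function `Δ̃ = ψ ∘ φ⁻¹` with `ψ(x) = x - (3/2) tanh x` satisfies the
sector bound `[-1, 1]`: `|Δ̃(u)| ≤ |u|` for every real `u`. -/
theorem stmt_6 :
    Function.Bijective (fun x : ℝ => x - (1 / 2) * Real.tanh x) ∧
      ∀ u : ℝ,
        |(fun x : ℝ => x - (3 / 2) * Real.tanh x)
            (Function.invFun (fun x : ℝ => x - (1 / 2) * Real.tanh x) u)| ≤ |u| := by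
  have hbij : Function.Bijective (fun x : ℝ => x - (1 / 2) * Real.tanh x) :=
    ⟨phi_strictMono.injective, phi_surjective⟩
  refine ⟨hbij, fun u => ?_⟩
  set x := Function.invFun (fun x : ℝ => x - (1 / 2) * Real.tanh x) u with hxdef
  have hx : x - (1 / 2) * Real.tanh x = u :=
    Function.rightInverse_invFun phi_surjective u
  simp only
  rw [← hx, ← Real.sqrt_sq_eq_abs, ← Real.sqrt_sq_eq_abs]
  apply Real.sqrt_le_sqrt
  nlinarith [tanh_key x]
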